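/- The 4×4 real matrix M = [[-3,√3,0,0],[-√3,-1,2,0],[0,-2,1,√3],[0,0,-√3,3]] is nilpotent of index exactly 4, i.e. M⁴ = 0 and M³ ≠ 0. -/
import Mathlib


open Matrix Real

noncomputable def M2 : Matrix (Fin 4) (Fin 4) ℝ :=
  !![-3, Real.sqrt 3, 0, 0;
     -Real.sqrt 3, -1, 2, 0;
     0, -2, 1, Real.sqrt 3;
     0, 0, -Real.sqrt 3, 3]

theorem stmt_2 : M2 ^ 4 = 0 ∧ M2 ^ 3 ≠ 0 := by
  have h3 : Real.sqrt 3 * Real.sqrt 3 = 3 := Real.mul_self_sqrt (by norm_num)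
  set s := Real.sqrt 3 with hs
  have hN : M2 * M2 = !![6, -4*s, 2*s, 0; 4*s, -6, 0, 2*s; 2*s, 0, -6, 4*s; 0, 2*s, -4*s, 6] := by
    ext i j
    fin_cases i <;> fin_cases j <;>
      simp [M2, Matrix.mul_apply, Fin.sum_univ_four, Matrix.vecHead, Matrix.vecTail] <;> nlinarith [h3]
  have h00 : (M2 ^ 3) 0 0 = -6 := by
    have h : M2 ^ 3 = (M2 * M2) * M2 := by rw [pow_succ, pow_two]
    rw [h, hN]
    simp [M2, Matrix.mul_apply, Fin.sum_univ_four, Matrix.vecHead, Matrix.vecTail]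
    nlinarith [h3]
  refine ⟨?_, ?_⟩
  · have h : M2 ^ 4 = (M2 * M2) * (M2 * M2) := by
      rw [pow_succ, pow_succ, pow_succ, pow_one, mul_assoc]
    rw [h, hN]
    ext i j
    fin_cases i <;> fin_cases j <;>
      simp [Matrix.mul_apply, Fin.sum_univ_four, Matrix.vecHead, Matrix.vecTail] <;> nlinarith [h3]
  · intro h
    rw [h] at h00
    simp at h00
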